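/- arXiv:2505.23431 — 5 statements merged into one kernel-verified Lean document; each statement's English description precedes it below -/
import Mathlib

section
/- For any three polygonal curves σ, τ, υ in Euclidean space ℝ^d and any k ∈ ℕ, the k-DTW distance satisfies the relaxed triangle inequality d_kDTW(σ,τ) ≤ k · (d_kDTW(σ,υ) + d_kDTW(υ,τ)). -/
open List

/-- A (monotone) traversal of two curves with `m'` and `m''` vertices:
a sequence of (0-based) index pairs starting at `(0,0)`, ending at `(m'-1, m''-1)`,
where each pair is followed by one that increments at least one index by one. -/
def IsTraversal (m' m'' : ℕ) (T : List (ℕ × ℕ)) : Prop :=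
  T ≠ [] ∧ T.head? = some (0, 0) ∧ T.getLast? = some (m' - 1, m'' - 1) ∧
  (∀ p ∈ T, p.1 < m' ∧ p.2 < m'') ∧
  T.Chain' (fun a b => b = (a.1 + 1, a.2) ∨ b = (a.1, a.2 + 1) ∨ b = (a.1 + 1, a.2 + 1))

/-- Sum of the `k` largest entries of a list of reals (zero-padded if the list is shorter). -/
noncomputable def topkSum (k : ℕ) (l : List ℝ) : ℝ :=
  ((l.insertionSort (· ≥ ·)).take k).sum

/-- The list of matched distances of a traversal. -/
def matchedDists {E : Type*} [PseudoMetricSpace E] (σ τ : ℕ → E) (T : List (ℕ × ℕ)) :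
    List ℝ :=
  T.map fun p => dist (σ p.1) (τ p.2)

/-- The `k`-DTW distance of curves `σ` (complexity `m'`) and `τ` (complexity `m''`). -/
noncomputable def kDTW {E : Type*} [PseudoMetricSpace E] (k : ℕ) (σ τ : ℕ → E)
    (m' m'' : ℕ) : ℝ :=
  sInf {x | ∃ T, IsTraversal m' m'' T ∧ x = topkSum k (matchedDists σ τ T)}

/-- The DTW distance. -/
noncomputable def DTW {E : Type*} [PseudoMetricSpace E] (σ τ : ℕ → E) (m' m'' : ℕ) : ℝ :=
  sInf {x | ∃ T, IsTraversal m' m'' T ∧ x = (matchedDists σ τ T).sum}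

/-- The discrete Fréchet distance. -/
noncomputable def discreteFrechet {E : Type*} [PseudoMetricSpace E] (σ τ : ℕ → E)
    (m' m'' : ℕ) : ℝ :=
  sInf {x | ∃ T, IsTraversal m' m'' T ∧ x = (matchedDists σ τ T).foldr max 0}

set_option linter.unreachableTactic false
set_option linter.unusedTactic false


theorem List.chain'_cons {α : Type*} {R : α → α → Prop} {a b : α} {l : List α} :
    Chain' R (a :: b :: l) ↔ R a b ∧ Chain' R (b :: l) := List.isChain_cons_cons

theorem List.chain'_cons' {α : Type*} {R : α → α → Prop} {x : α} {l : List α} :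
    Chain' R (x :: l) ↔ (∀ y ∈ l.head?, R x y) ∧ Chain' R l := List.isChain_cons

theorem List.chain'_append {α : Type*} {R : α → α → Prop} {l₁ l₂ : List α} :
    Chain' R (l₁ ++ l₂) ↔ Chain' R l₁ ∧ Chain' R l₂ ∧
      ∀ x ∈ l₁.getLast?, ∀ y ∈ l₂.head?, R x y := List.isChain_append

def Step (a b : ℕ × ℕ) : Prop :=
  b = (a.1 + 1, a.2) ∨ b = (a.1, a.2 + 1) ∨ b = (a.1 + 1, a.2 + 1)

lemma step_mono {a b : ℕ × ℕ} (h : Step a b) : a.1 ≤ b.1 ∧ a.2 ≤ b.2 := by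
  rcases h with h | h | h <;> subst h <;> simp <;> omega

lemma chain_head_le : ∀ (l : List (ℕ × ℕ)) (a : ℕ × ℕ), Chain' Step (a :: l) →
    ∀ p ∈ a :: l, a.1 ≤ p.1 ∧ a.2 ≤ p.2
  | [], a, _, p, hp => by simp_all
  | b :: l, a, hc, p, hp => by
    rw [List.chain'_cons] at hc
    rcases List.mem_cons.1 hp with rfl | hp
    · exact ⟨le_refl _, le_refl _⟩
    · have := chain_head_le l b hc.2 p hp
      have := step_mono hc.1
      omega

lemma chain_le_last : ∀ (l : List (ℕ × ℕ)), Chain' Step l →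
    ∀ p ∈ l, ∀ z, l.getLast? = some z → p.1 ≤ z.1 ∧ p.2 ≤ z.2
  | [], _, p, hp => by simp_all
  | [a], _, p, hp => by
    simp only [List.mem_singleton] at hp
    subst hp
    intro z hz
    simp at hz
    subst hz
    exact ⟨le_refl _, le_refl _⟩
  | a :: b :: l, hc, p, hp => by
    intro z hz
    rw [List.getLast?_cons_cons] at hz
    rw [List.chain'_cons] at hc
    rcases List.mem_cons.1 hp with rfl | hp
    · have h1 := step_mono hc.1
      have h2 := chain_le_last (b :: l) hc.2 b (by simp) z hz
      omega
    · exact chain_le_last (b :: l) hc.2 p hp z hz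

lemma map_chain_right (i c : ℕ) : ∀ (l : List (ℕ × ℕ)), Chain' Step l →
    (∀ r ∈ l, r.1 = c) → Chain' Step (l.map fun r => (i, r.2))
  | [], _, _ => by simp [List.Chain', List.isChain_nil]
  | [a], _, _ => by simp [List.Chain', List.isChain_singleton]
  | a :: b :: l, hc, hm => by
    rw [List.chain'_cons] at hc
    have ha : a.1 = c := hm a (by simp)
    have hb : b.1 = c := hm b (by simp)
    have hab : b = (a.1, a.2 + 1) := by
      rcases hc.1 with h | h | h <;> (subst h; simp_all) <;> omega
    simp only [List.map_cons, List.chain'_cons]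
    constructor
    · right; left; rw [hab]
    · exact map_chain_right i c (b :: l) hc.2 (fun r hr => hm r (by simp [hr]))

lemma map_chain_left (j c : ℕ) : ∀ (l : List (ℕ × ℕ)), Chain' Step l →
    (∀ r ∈ l, r.2 = c) → Chain' Step (l.map fun r => (r.1, j))
  | [], _, _ => by simp [List.Chain', List.isChain_nil]
  | [a], _, _ => by simp [List.Chain', List.isChain_singleton]
  | a :: b :: l, hc, hm => by
    rw [List.chain'_cons] at hc
    have ha : a.2 = c := hm a (by simp)
    have hb : b.2 = c := hm b (by simp)
    have hab : b = (a.1 + 1, a.2) := by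
      rcases hc.1 with h | h | h <;> (subst h; simp_all) <;> omega
    simp only [List.map_cons, List.chain'_cons]
    constructor
    · left; rw [hab]
    · exact map_chain_left j c (b :: l) hc.2 (fun r hr => hm r (by simp [hr]))

lemma getLast?_cons_ne {α} (x : α) (l : List α) (h : l ≠ []) :
    (x :: l).getLast? = l.getLast? := by
  cases l with
  | nil => simp at h
  | cons a t => exact List.getLast?_cons_cons

lemma step_num {a b : ℕ × ℕ} (h : Step a b) :
    (b.1 = a.1 + 1 ∧ b.2 = a.2) ∨ (b.1 = a.1 ∧ b.2 = a.2 + 1) ∨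
    (b.1 = a.1 + 1 ∧ b.2 = a.2 + 1) := by
  rcases h with h | h | h <;> subst h <;> simp

lemma step_of_num {a b : ℕ × ℕ}
    (h : (b.1 = a.1 + 1 ∧ b.2 = a.2) ∨ (b.1 = a.1 ∧ b.2 = a.2 + 1) ∨
      (b.1 = a.1 + 1 ∧ b.2 = a.2 + 1)) : Step a b := by
  unfold Step
  rcases h with ⟨h1, h2⟩ | ⟨h1, h2⟩ | ⟨h1, h2⟩ <;>
    [left; (right; left); (right; right)] <;> exact Prod.ext h1 h2

lemma compose : ∀ (n : ℕ) (T₁ T₂ : List (ℕ × ℕ)) (a₁ b₁ a₂ b₂ : ℕ × ℕ),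
    T₁.length + T₂.length ≤ n →
    T₁.head? = some a₁ → T₁.getLast? = some b₁ →
    T₂.head? = some a₂ → T₂.getLast? = some b₂ →
    a₁.2 = a₂.1 → b₁.2 = b₂.1 →
    Chain' Step T₁ → Chain' Step T₂ →
    ∃ T : List (ℕ × ℕ), T.head? = some (a₁.1, a₂.2) ∧ T.getLast? = some (b₁.1, b₂.2) ∧
      Chain' Step T ∧ ∀ p ∈ T, ∃ q ∈ T₁, ∃ r ∈ T₂, q.2 = r.1 ∧ p = (q.1, r.2) := by
  intro n
  induction n with
  | zero =>
    intro T₁ T₂ a₁ b₁ a₂ b₂ hlen h1h _ _ _ _ _ _ _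
    cases T₁ with
    | nil => simp at h1h
    | cons x t => simp at hlen
  | succ n ih =>
    intro T₁ T₂ a₁ b₁ a₂ b₂ hlen h1h h1l h2h h2l hh hl c₁ c₂
    rcases T₁ with _ | ⟨a, _ | ⟨a', s₁⟩⟩
    · simp at h1h
    · -- T₁ = [a]
      simp only [List.head?_cons, Option.some.injEq] at h1h
      simp only [List.getLast?_singleton, Option.some.injEq] at h1l
      subst h1h; subst h1l
      rcases T₂ with _ | ⟨b, t₂⟩
      · simp at h2h
      · simp only [List.head?_cons, Option.some.injEq] at h2h
        subst h2h
        have hall : ∀ r ∈ b :: t₂, r.1 = a.2 := by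
          intro r hr
          have h1 := chain_head_le t₂ b c₂ r hr
          have h2 := chain_le_last (b :: t₂) c₂ r hr b₂ h2l
          omega
        refine ⟨(b :: t₂).map fun r => (a.1, r.2), ?_, ?_, ?_, ?_⟩
        · simp
        · rw [List.getLast?_map, h2l]; rfl
        · exact map_chain_right a.1 a.2 (b :: t₂) c₂ hall
        · intro p hp
          simp only [List.mem_map] at hp
          obtain ⟨r, hr, rfl⟩ := hp
          exact ⟨a, by simp, r, hr, (hall r hr).symm, rfl⟩
    · -- T₁ = a :: a' :: s₁
      rcases T₂ with _ | ⟨b, _ | ⟨b', s₂⟩⟩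
      · simp at h2h
      · -- T₂ = [b]
        simp only [List.head?_cons, Option.some.injEq] at h1h h2h
        simp only [List.getLast?_singleton, Option.some.injEq] at h2l
        subst h1h; subst h2h; subst h2l
        have hall : ∀ q ∈ a :: a' :: s₁, q.2 = b.1 := by
          intro q hq
          have h1 := chain_head_le (a' :: s₁) a c₁ q hq
          have h2 := chain_le_last (a :: a' :: s₁) c₁ q hq b₁ h1l
          omega
        refine ⟨(a :: a' :: s₁).map fun q => (q.1, b.2), ?_, ?_, ?_, ?_⟩
        · simp
        · rw [List.getLast?_map, h1l]; rfl
        · exact map_chain_left b.2 b.1 (a :: a' :: s₁) c₁ hall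
        · intro p hp
          simp only [List.mem_map] at hp
          obtain ⟨q, hq, rfl⟩ := hp
          exact ⟨q, hq, b, by simp, hall q hq, rfl⟩
      · -- main case
        simp only [List.head?_cons, Option.some.injEq] at h1h h2h
        subst h1h; subst h2h
        rw [List.getLast?_cons_cons] at h1l h2l
        rw [List.chain'_cons] at c₁ c₂
        have hs₁ := step_num c₁.1
        have hs₂ := step_num c₂.1
        simp only [List.length_cons] at hlen
        by_cases ha : a'.2 = a.2
        · -- advance first list only
          obtain ⟨T', hTh, hTl, hTc, hTm⟩ :=
            ih (a' :: s₁) (b :: b' :: s₂) a' b₁ b b₂ (by simp; omega) rfl h1l rfl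
              (by rw [List.getLast?_cons_cons]; exact h2l) (by omega) hl c₁.2
              (List.chain'_cons.2 c₂)
          refine ⟨(a.1, b.2) :: T', by simp, ?_, ?_, ?_⟩
          · rw [getLast?_cons_ne _ _ (by rintro rfl; simp at hTh)]; exact hTl
          · refine List.chain'_cons'.2 ⟨?_, hTc⟩
            intro y hy
            rw [hTh] at hy
            simp only [Option.mem_def, Option.some.injEq] at hy
            subst hy
            exact step_of_num (by simp; omega)
          · intro p hp
            rcases List.mem_cons.1 hp with rfl | hp
            · exact ⟨a, by simp, b, by simp, hh, rfl⟩
            · obtain ⟨q, hq, r, hr, h1, h2⟩ := hTm p hp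
              exact ⟨q, by simp [List.mem_cons] at hq ⊢; tauto, r, hr, h1, h2⟩
        · by_cases hb : b'.1 = b.1
          · -- advance second list only
            obtain ⟨T', hTh, hTl, hTc, hTm⟩ :=
              ih (a :: a' :: s₁) (b' :: s₂) a b₁ b' b₂ (by simp; omega) rfl
                (by rw [List.getLast?_cons_cons]; exact h1l) rfl h2l (by omega) hl
                (List.chain'_cons.2 c₁) c₂.2
            refine ⟨(a.1, b.2) :: T', by simp, ?_, ?_, ?_⟩
            · rw [getLast?_cons_ne _ _ (by rintro rfl; simp at hTh)]; exact hTl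
            · refine List.chain'_cons'.2 ⟨?_, hTc⟩
              intro y hy
              rw [hTh] at hy
              simp only [Option.mem_def, Option.some.injEq] at hy
              subst hy
              exact step_of_num (by simp; omega)
            · intro p hp
              rcases List.mem_cons.1 hp with rfl | hp
              · exact ⟨a, by simp, b, by simp, hh, rfl⟩
              · obtain ⟨q, hq, r, hr, h1, h2⟩ := hTm p hp
                exact ⟨q, hq, r, by simp [List.mem_cons] at hr ⊢; tauto, h1, h2⟩
          · -- advance both
            obtain ⟨T', hTh, hTl, hTc, hTm⟩ :=
              ih (a' :: s₁) (b' :: s₂) a' b₁ b' b₂ (by simp; omega) rfl h1l rfl h2l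
                (by omega) hl c₁.2 c₂.2
            have hmem : ∀ p ∈ T', ∃ q ∈ a :: a' :: s₁, ∃ r ∈ b :: b' :: s₂,
                q.2 = r.1 ∧ p = (q.1, r.2) := by
              intro p hp
              obtain ⟨q, hq, r, hr, h1, h2⟩ := hTm p hp
              exact ⟨q, by simp [List.mem_cons] at hq ⊢; tauto, r,
                by simp [List.mem_cons] at hr ⊢; tauto, h1, h2⟩
            by_cases hsk : a'.1 = a.1 ∧ b'.2 = b.2
            · refine ⟨T', ?_, hTl, hTc, hmem⟩
              rw [hTh, hsk.1, hsk.2]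
            · refine ⟨(a.1, b.2) :: T', by simp, ?_, ?_, ?_⟩
              · rw [getLast?_cons_ne _ _ (by rintro rfl; simp at hTh)]; exact hTl
              · refine List.chain'_cons'.2 ⟨?_, hTc⟩
                intro y hy
                rw [hTh] at hy
                simp only [Option.mem_def, Option.some.injEq] at hy
                subst hy
                refine step_of_num ?_
                simp only
                omega
              · intro p hp
                rcases List.mem_cons.1 hp with rfl | hp
                · exact ⟨a, by simp, b, by simp, hh, rfl⟩
                · exact hmem p hp

lemma topkSum_nonneg (k : ℕ) (l : List ℝ) (h : ∀ x ∈ l, 0 ≤ x) : 0 ≤ topkSum k l := by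
  apply List.sum_nonneg
  intro x hx
  exact h x ((List.perm_insertionSort (· ≥ ·) l).subset (List.mem_of_mem_take hx))

lemma topkSum_le (k : ℕ) (l : List ℝ) (M : ℝ) (hM : 0 ≤ M) (h : ∀ x ∈ l, x ≤ M) :
    topkSum k l ≤ (k : ℝ) * M := by
  have h1 : ((l.insertionSort (· ≥ ·)).take k).sum ≤
      ((l.insertionSort (· ≥ ·)).take k).length • M := by
    apply List.sum_le_card_nsmul
    intro x hx
    exact h x ((List.perm_insertionSort (· ≥ ·) l).subset (List.mem_of_mem_take hx))
  refine h1.trans ?_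
  rw [nsmul_eq_mul]
  apply mul_le_mul_of_nonneg_right _ hM
  exact_mod_cast (List.length_take_le k _)

lemma le_topkSum (k : ℕ) (hk : 1 ≤ k) (l : List ℝ) (h0 : ∀ x ∈ l, 0 ≤ x)
    {x : ℝ} (hx : x ∈ l) : x ≤ topkSum k l := by
  have hperm := List.perm_insertionSort (· ≥ ·) l
  have hx' : x ∈ l.insertionSort (· ≥ ·) := hperm.mem_iff.2 hx
  have hsorted := List.pairwise_insertionSort (· ≥ ·) l
  unfold topkSum
  obtain ⟨k', rfl⟩ := Nat.exists_eq_add_of_le hk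
  cases hs : l.insertionSort (· ≥ ·) with
  | nil => rw [hs] at hx'; simp at hx'
  | cons a t =>
    rw [hs] at hx' hsorted
    have hxa : x ≤ a := by
      rcases List.mem_cons.1 hx' with rfl | hxt
      · exact le_refl _
      · exact (List.pairwise_cons.1 hsorted).1 x hxt
    rw [List.take_cons, List.sum_cons]
    have : 0 ≤ (t.take (1 + k' - 1)).sum := by
      apply List.sum_nonneg
      intro y hy
      refine h0 y (hperm.subset ?_)
      rw [hs]
      exact List.mem_cons_of_mem a (List.mem_of_mem_take hy)
    linarith
    omega

lemma isTraversal_extend_right (m m' : ℕ) (T : List (ℕ × ℕ))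
    (h : IsTraversal (m + 1) (m' + 1) T) :
    IsTraversal (m + 1) (m' + 2) (T ++ [(m, m' + 1)]) := by
  obtain ⟨hne, hh, hl, hb, hc⟩ := h
  refine ⟨by simp, ?_, ?_, ?_, ?_⟩
  · rw [List.head?_append_of_ne_nil _ hne]; simpa using hh
  · simp
  · intro p hp
    rcases List.mem_append.1 hp with hp | hp
    · have := hb p hp; omega
    · simp at hp; subst hp; simp
  · rw [List.chain'_append]
    refine ⟨hc, by simp [List.Chain', List.isChain_singleton], ?_⟩
    intro x hx y hy
    simp only [List.head?_cons, Option.mem_def, Option.some.injEq] at hy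
    subst hy
    rw [Option.mem_def, hl] at hx
    cases hx
    right; left
    simp

lemma isTraversal_extend_down (m m' : ℕ) (T : List (ℕ × ℕ))
    (h : IsTraversal (m + 1) (m' + 1) T) :
    IsTraversal (m + 2) (m' + 1) (T ++ [(m + 1, m')]) := by
  obtain ⟨hne, hh, hl, hb, hc⟩ := h
  refine ⟨by simp, ?_, ?_, ?_, ?_⟩
  · rw [List.head?_append_of_ne_nil _ hne]; simpa using hh
  · simp
  · intro p hp
    rcases List.mem_append.1 hp with hp | hp
    · have := hb p hp; omega
    · simp at hp; subst hp; simp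
  · rw [List.chain'_append]
    refine ⟨hc, by simp [List.Chain', List.isChain_singleton], ?_⟩
    intro x hx y hy
    simp only [List.head?_cons, Option.mem_def, Option.some.injEq] at hy
    subst hy
    rw [Option.mem_def, hl] at hx
    cases hx
    left
    simp

lemma exists_traversal' : ∀ m m' : ℕ, ∃ T, IsTraversal (m + 1) (m' + 1) T := by
  intro m
  induction m with
  | zero =>
    intro m'
    induction m' with
    | zero => exact ⟨[(0, 0)], by simp, rfl, rfl, by simp, by simp [List.Chain', List.isChain_singleton]⟩
    | succ m' ih =>
      obtain ⟨T, hT⟩ := ih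
      exact ⟨T ++ [(0, m' + 1)], isTraversal_extend_right 0 m' T hT⟩
  | succ m ih =>
    intro m'
    obtain ⟨T, hT⟩ := ih m'
    exact ⟨T ++ [(m + 1, m')], isTraversal_extend_down m m' T hT⟩

lemma exists_traversal (m m' : ℕ) (hm : 1 ≤ m) (hm' : 1 ≤ m') :
    ∃ T, IsTraversal m m' T := by
  obtain ⟨a, rfl⟩ := Nat.exists_eq_add_of_le hm
  obtain ⟨b, rfl⟩ := Nat.exists_eq_add_of_le hm'
  simpa [Nat.add_comm] using exists_traversal' a b


/-- relaxed triangle inequality for `k`-DTW. -/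
theorem kDTW_relaxed_triangle_ineq {d : ℕ} (k m₁ m₂ m₃ : ℕ)
    (hm₁ : 1 ≤ m₁) (hm₂ : 1 ≤ m₂) (hm₃ : 1 ≤ m₃)
    (σ τ υ : ℕ → EuclideanSpace ℝ (Fin d)) :
    kDTW k σ τ m₁ m₃ ≤ (k : ℝ) * (kDTW k σ υ m₁ m₂ + kDTW k υ τ m₂ m₃) := by
  rcases Nat.eq_zero_or_pos k with rfl | hk
  · have hset : {x | ∃ T, IsTraversal m₁ m₃ T ∧ x = topkSum 0 (matchedDists σ τ T)}
        = {(0 : ℝ)} := by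
      ext x
      simp only [Set.mem_setOf_eq, Set.mem_singleton_iff]
      constructor
      · rintro ⟨T, _, rfl⟩; simp [topkSum]
      · rintro rfl
        obtain ⟨T, hT⟩ := exists_traversal m₁ m₃ hm₁ hm₃
        exact ⟨T, hT, by simp [topkSum]⟩
    rw [kDTW, hset]
    simp
  · have hk' : (0 : ℝ) < k := by exact_mod_cast hk
    refine le_of_forall_pos_le_add ?_
    intro ε hε
    set δ := ε / (2 * k) with hδ
    have hδpos : 0 < δ := div_pos hε (by linarith)
    have hS₁ : Set.Nonempty
        {x | ∃ T, IsTraversal m₁ m₂ T ∧ x = topkSum k (matchedDists σ υ T)} := by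
      obtain ⟨T, hT⟩ := exists_traversal m₁ m₂ hm₁ hm₂
      exact ⟨_, T, hT, rfl⟩
    have hS₂ : Set.Nonempty
        {x | ∃ T, IsTraversal m₂ m₃ T ∧ x = topkSum k (matchedDists υ τ T)} := by
      obtain ⟨T, hT⟩ := exists_traversal m₂ m₃ hm₂ hm₃
      exact ⟨_, T, hT, rfl⟩
    obtain ⟨x₁, hx₁S, hx₁lt⟩ := Real.lt_sInf_add_pos hS₁ hδpos
    obtain ⟨x₂, hx₂S, hx₂lt⟩ := Real.lt_sInf_add_pos hS₂ hδpos
    obtain ⟨T₁, hT₁, rfl⟩ := hx₁S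
    obtain ⟨T₂, hT₂, rfl⟩ := hx₂S
    obtain ⟨hne₁, hh₁, hl₁, hb₁, hc₁⟩ := hT₁
    obtain ⟨hne₂, hh₂, hl₂, hb₂, hc₂⟩ := hT₂
    obtain ⟨T, hTh, hTl, hTc, hTm⟩ :=
      compose (T₁.length + T₂.length) T₁ T₂ (0, 0) (m₁ - 1, m₂ - 1) (0, 0) (m₂ - 1, m₃ - 1)
        le_rfl hh₁ hl₁ hh₂ hl₂ rfl rfl hc₁ hc₂
    have hTrav : IsTraversal m₁ m₃ T := by
      refine ⟨by rintro rfl; simp at hTh, hTh, hTl, ?_, hTc⟩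
      intro p hp
      obtain ⟨q, hq, r, hr, h1, rfl⟩ := hTm p hp
      exact ⟨(hb₁ q hq).1, (hb₂ r hr).2⟩
    have hd1 : ∀ x ∈ matchedDists σ υ T₁, 0 ≤ x := by
      intro x hx
      rw [matchedDists, List.mem_map] at hx
      obtain ⟨p, _, rfl⟩ := hx
      exact dist_nonneg
    have hd2 : ∀ x ∈ matchedDists υ τ T₂, 0 ≤ x := by
      intro x hx
      rw [matchedDists, List.mem_map] at hx
      obtain ⟨p, _, rfl⟩ := hx
      exact dist_nonneg
    have nn1 : 0 ≤ topkSum k (matchedDists σ υ T₁) := topkSum_nonneg _ _ hd1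
    have nn2 : 0 ≤ topkSum k (matchedDists υ τ T₂) := topkSum_nonneg _ _ hd2
    have key : ∀ x ∈ matchedDists σ τ T,
        x ≤ topkSum k (matchedDists σ υ T₁) + topkSum k (matchedDists υ τ T₂) := by
      intro x hx
      rw [matchedDists, List.mem_map] at hx
      obtain ⟨p, hp, rfl⟩ := hx
      obtain ⟨q, hq, r, hr, h1, rfl⟩ := hTm p hp
      have tri : dist (σ q.1) (τ r.2) ≤ dist (σ q.1) (υ q.2) + dist (υ r.1) (τ r.2) := by
        rw [← h1]
        exact dist_triangle _ _ _
      have m1 : dist (σ q.1) (υ q.2) ≤ topkSum k (matchedDists σ υ T₁) :=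
        le_topkSum k hk _ hd1 (by rw [matchedDists, List.mem_map]; exact ⟨q, hq, rfl⟩)
      have m2 : dist (υ r.1) (τ r.2) ≤ topkSum k (matchedDists υ τ T₂) :=
        le_topkSum k hk _ hd2 (by rw [matchedDists, List.mem_map]; exact ⟨r, hr, rfl⟩)
      simp only
      linarith
    have hle1 : kDTW k σ τ m₁ m₃ ≤ topkSum k (matchedDists σ τ T) := by
      apply csInf_le
      · refine ⟨0, ?_⟩
        rintro y ⟨T', _, rfl⟩
        apply topkSum_nonneg
        intro x hx
        rw [matchedDists, List.mem_map] at hx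
        obtain ⟨p, _, rfl⟩ := hx
        exact dist_nonneg
      · exact ⟨T, hTrav, rfl⟩
    have hle2 : topkSum k (matchedDists σ τ T) ≤
        (k : ℝ) * (topkSum k (matchedDists σ υ T₁) + topkSum k (matchedDists υ τ T₂)) :=
      topkSum_le _ _ _ (add_nonneg nn1 nn2) key
    have hA : kDTW k σ υ m₁ m₂ =
        sInf {x | ∃ T, IsTraversal m₁ m₂ T ∧ x = topkSum k (matchedDists σ υ T)} := rfl
    have hB : kDTW k υ τ m₂ m₃ =
        sInf {x | ∃ T, IsTraversal m₂ m₃ T ∧ x = topkSum k (matchedDists υ τ T)} := rfl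
    have hle3 : (k : ℝ) * (topkSum k (matchedDists σ υ T₁) + topkSum k (matchedDists υ τ T₂))
        ≤ (k : ℝ) * ((kDTW k σ υ m₁ m₂ + δ) + (kDTW k υ τ m₂ m₃ + δ)) := by
      apply mul_le_mul_of_nonneg_left _ (le_of_lt hk')
      rw [hA, hB]
      linarith
    have heq : (k : ℝ) * ((kDTW k σ υ m₁ m₂ + δ) + (kDTW k υ τ m₂ m₃ + δ))
        = (k : ℝ) * (kDTW k σ υ m₁ m₂ + kDTW k υ τ m₂ m₃) + ε := by
      rw [hδ]
      field_simp
      ring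
    linarith
end

section
/- For any k ≥ 1 and m ≥ 3 with k ≤ m-2, there exist three polygonal curves σ, τ, υ of complexity m in ℝ (namely σ all zeros, τ = (0, ε, ..., ε, 0), υ = (0, ε, 0, ..., 0) for ε > 0) such that d_kDTW(σ,τ) = k·ε, d_kDTW(σ,υ) = ε, and d_kDTW(υ,τ) = 0; hence the factor k in the relaxed triangle inequality d_kDTW(σ,τ) ≤ k·(d_kDTW(σ,υ) + d_kDTW(υ,τ)) is tight. -/
open List

/- ### Auxiliary lemmas -/

lemma aux_sorted_pair (ε : ℝ) (hε : 0 < ε) (l : List ℝ) (hl : ∀ x ∈ l, x = 0 ∨ x = ε) :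
    l.insertionSort (· ≥ ·) = replicate (l.count ε) ε ++ replicate (l.count 0) 0 := by
  refine Perm.eq_of_pairwise' (pairwise_insertionSort _ l) ?_ ((perm_insertionSort _ l).trans ?_)
  swap
  · rw [perm_iff_count]
    intro a
    rw [count_append, count_replicate, count_replicate]
    by_cases h1 : a = ε
    · subst h1
      simp [hε.ne, hε.ne']
    · by_cases h0 : a = 0
      · subst h0
        simp [hε.ne, hε.ne']
      · have hna : a ∉ l := fun h => by rcases hl a h with h | h <;> [exact h0 h; exact h1 h]
        simp [count_eq_zero.mpr hna, Ne.symm h0, Ne.symm h1]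
  · rw [pairwise_append]
    refine ⟨pairwise_replicate.mpr (Or.inr le_rfl), pairwise_replicate.mpr (Or.inr le_rfl), ?_⟩
    intro a ha b hb
    rw [eq_of_mem_replicate ha, eq_of_mem_replicate hb]
    exact hε.le

lemma aux_topkSum_pair (k : ℕ) (ε : ℝ) (hε : 0 < ε) (l : List ℝ)
    (hl : ∀ x ∈ l, x = 0 ∨ x = ε) :
    topkSum k l = (min k (l.count ε) : ℕ) * ε := by
  rw [topkSum, aux_sorted_pair ε hε l hl, take_append, take_replicate,
    take_replicate, sum_append, sum_replicate, sum_replicate, smul_zero, add_zero,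
    nsmul_eq_mul]

lemma aux_mem_of_chain_succ :
    ∀ (L : List ℕ) (x y j : ℕ), L.Chain' (fun a b => b = a ∨ b = a + 1) →
      L.head? = some x → L.getLast? = some y → x ≤ j → j ≤ y → j ∈ L
  | [], _, _, _, _, hh, _, _, _ => by simp at hh
  | [a], x, y, j, _, hh, hl, h1, h2 => by
      simp only [head?_cons, Option.some.injEq] at hh
      simp only [getLast?_singleton, Option.some.injEq] at hl
      have : j = a := by omega
      simp [this]
  | a :: b :: L, x, y, j, hc, hh, hl, h1, h2 => by
      rw [Chain', isChain_cons_cons] at hc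
      simp only [head?_cons, Option.some.injEq] at hh
      rw [getLast?_cons_cons] at hl
      by_cases hj : j = a
      · simp [hj]
      · have hb : b ≤ j := by rcases hc.1 with h | h <;> omega
        exact mem_cons_of_mem _ (aux_mem_of_chain_succ (b :: L) b y j hc.2 rfl hl hb h2)

lemma aux_snd_mem_traversal {m : ℕ} {T : List (ℕ × ℕ)} (hT : IsTraversal m m T)
    (j : ℕ) (hj : j ≤ m - 1) : j ∈ T.map Prod.snd := by
  obtain ⟨hne, hh, hl, hb, hc⟩ := hT
  refine aux_mem_of_chain_succ (T.map Prod.snd) 0 (m - 1) j ?_ ?_ ?_ (Nat.zero_le _) hj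
  · rw [Chain', isChain_map]
    refine IsChain.imp (fun a b h => ?_) hc
    rcases h with h | h | h <;> subst h <;> simp
  · rw [head?_map, hh]; rfl
  · rw [getLast?_map, hl]; rfl

lemma aux_countP_snd_ge {m : ℕ} {T : List (ℕ × ℕ)} (hT : IsTraversal m m T)
    (q : ℕ → Bool) (R : List ℕ) (hR : R.Nodup)
    (hmem : ∀ j ∈ R, j ≤ m - 1 ∧ q j = true) :
    R.length ≤ T.countP (fun p => q p.2) := by
  have h1 : T.countP (fun p => q p.2) = (T.map Prod.snd).countP q := by
    rw [countP_map]; rfl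
  rw [h1, countP_eq_length_filter]
  refine Subperm.length_le (subperm_of_subset hR ?_)
  intro j hj
  rw [mem_filter]
  exact ⟨aux_snd_mem_traversal hT j (hmem j hj).1, (hmem j hj).2⟩

lemma aux_kdtw_eq (k m : ℕ) (σ τ : ℕ → ℝ) (c : ℝ)
    (hlb : ∀ T, IsTraversal m m T → c ≤ topkSum k (matchedDists σ τ T))
    (hub : ∃ T, IsTraversal m m T ∧ topkSum k (matchedDists σ τ T) = c) :
    kDTW k σ τ m m = c := by
  obtain ⟨T0, hT0, hv⟩ := hub
  refine le_antisymm (csInf_le ⟨c, ?_⟩ ⟨T0, hT0, hv.symm⟩) (le_csInf ⟨_, T0, hT0, rfl⟩ ?_)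
  · rintro x ⟨T, hT, rfl⟩; exact hlb T hT
  · rintro x ⟨T, hT, rfl⟩; exact hlb T hT

lemma aux_diag_traversal (m : ℕ) (hm : 1 ≤ m) :
    IsTraversal m m ((range m).map fun i => (i, i)) := by
  refine ⟨?_, ?_, ?_, ?_, ?_⟩
  · simp only [ne_eq, map_eq_nil_iff, range_eq_nil]
    omega
  · rw [head?_eq_getElem?, getElem?_map, getElem?_range (show 0 < m by omega)]
    rfl
  · rw [getLast?_eq_getElem?]
    simp only [length_map, length_range]
    rw [getElem?_map, getElem?_range (show m - 1 < m by omega)]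
    rfl
  · intro p hp
    simp only [mem_map, mem_range] at hp
    obtain ⟨i, hi, rfl⟩ := hp
    exact ⟨hi, hi⟩
  · rw [Chain', isChain_map]
    obtain ⟨n, rfl⟩ : ∃ n, m = n + 1 := ⟨m - 1, by omega⟩
    rw [show (n + 1) = Nat.succ n from rfl, isChain_range_succ]
    intro i _
    right; right; rfl

/-- The zig traversal used for `υ` vs `τ`. -/
def g3 (m : ℕ) : ℕ → ℕ × ℕ := fun i =>
  if i = 0 then (0, 0) else if i ≤ m - 2 then (1, i) else (i - (m - 3), m - 1)

lemma aux_T3_traversal (m : ℕ) (hm : 3 ≤ m) :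
    IsTraversal m m ((range (2 * m - 3)).map (g3 m)) := by
  refine ⟨?_, ?_, ?_, ?_, ?_⟩
  · simp only [ne_eq, map_eq_nil_iff, range_eq_nil]
    omega
  · rw [head?_eq_getElem?, getElem?_map, getElem?_range (show 0 < 2 * m - 3 by omega)]
    simp [g3]
  · rw [getLast?_eq_getElem?]
    simp only [length_map, length_range]
    rw [getElem?_map, getElem?_range (show 2 * m - 3 - 1 < 2 * m - 3 by omega)]
    simp only [Option.map_some]
    unfold g3
    rw [if_neg (by omega), if_neg (by omega)]
    congr 2
    omega
  · intro p hp
    simp only [mem_map, mem_range] at hp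
    obtain ⟨i, hi, rfl⟩ := hp
    unfold g3
    split_ifs <;> constructor <;> simp <;> omega
  · rw [Chain', isChain_map]
    obtain ⟨n, hn⟩ : ∃ n, 2 * m - 3 = n + 1 := ⟨2 * m - 4, by omega⟩
    rw [hn, show (n + 1) = Nat.succ n from rfl, isChain_range_succ]
    intro i hi
    unfold g3
    split_ifs
    all_goals first
      | (exact (by assumption : False).elim)
      | (simp only [Prod.ext_iff, Prod.mk.injEq]; omega)
      | (simp [Prod.ext_iff]; omega)
      | simp [Prod.ext_iff]

lemma part1 (m k : ℕ) (hm : 3 ≤ m) (hk : 1 ≤ k) (hkm : k ≤ m - 2) (ε : ℝ) (hε : 0 < ε) :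
    kDTW k (fun _ => (0 : ℝ)) (fun j => if j = 0 ∨ j = m - 1 then 0 else ε) m m = (k : ℝ) * ε := by
  set τ : ℕ → ℝ := fun j => if j = 0 ∨ j = m - 1 then 0 else ε with hτ
  have hall : ∀ T, IsTraversal m m T →
      topkSum k (matchedDists (fun _ => (0 : ℝ)) τ T) = (k : ℝ) * ε := by
    intro T hT
    have hl : ∀ x ∈ matchedDists (fun _ => (0 : ℝ)) τ T, x = 0 ∨ x = ε := by
      intro x hx
      rw [matchedDists, mem_map] at hx
      obtain ⟨p, hp, rfl⟩ := hx
      simp only [hτ, Real.dist_eq, zero_sub, abs_neg]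
      split_ifs with h
      · left; simp
      · right; exact abs_of_pos hε
    have hcount : m - 2 ≤ (matchedDists (fun _ => (0 : ℝ)) τ T).count ε := by
      have h1 : (matchedDists (fun _ => (0 : ℝ)) τ T).count ε
          = T.countP (fun p => decide (p.2 ≠ 0 ∧ p.2 ≠ m - 1)) := by
        rw [matchedDists, count_eq_countP, countP_map]
        refine countP_congr (fun p hp => ?_)
        simp only [Function.comp_apply, beq_iff_eq, decide_eq_true_eq, hτ, Real.dist_eq,
          zero_sub, abs_neg]
        by_cases hc : p.2 = 0 ∨ p.2 = m - 1
        · rw [if_pos hc, abs_zero]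
          exact iff_of_false hε.ne (by tauto)
        · rw [if_neg hc, abs_of_pos hε]
          exact iff_of_true rfl (by tauto)
      rw [h1]
      have h2 := aux_countP_snd_ge hT (fun j => decide (j ≠ 0 ∧ j ≠ m - 1))
        (range' 1 (m - 2)) nodup_range' ?_
      · simpa [length_range'] using h2
      · intro j hj
        rw [mem_range'] at hj
        obtain ⟨i, hi, rfl⟩ := hj
        refine ⟨by omega, ?_⟩
        simp only [decide_eq_true_eq]
        omega
    rw [aux_topkSum_pair k ε hε _ hl]
    have : min k ((matchedDists (fun _ => (0 : ℝ)) τ T).count ε) = k := by omega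
    rw [this]
  exact aux_kdtw_eq k m _ τ _ (fun T hT => (hall T hT).ge)
    ⟨_, aux_diag_traversal m (by omega), hall _ (aux_diag_traversal m (by omega))⟩

lemma part2 (m k : ℕ) (hm : 3 ≤ m) (hk : 1 ≤ k) (ε : ℝ) (hε : 0 < ε) :
    kDTW k (fun _ => (0 : ℝ)) (fun j => if j = 1 then ε else 0) m m = ε := by
  set υ : ℕ → ℝ := fun j => if j = 1 then ε else 0 with hυ
  have hl : ∀ T, ∀ x ∈ matchedDists (fun _ => (0 : ℝ)) υ T, x = 0 ∨ x = ε := by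
    intro T x hx
    rw [matchedDists, mem_map] at hx
    obtain ⟨p, hp, rfl⟩ := hx
    simp only [hυ, Real.dist_eq, zero_sub, abs_neg]
    split_ifs with h
    · right; exact abs_of_pos hε
    · left; simp
  have hcnt : ∀ T, (matchedDists (fun _ => (0 : ℝ)) υ T).count ε
      = T.countP (fun p => decide (p.2 = 1)) := by
    intro T
    rw [matchedDists, count_eq_countP, countP_map]
    refine countP_congr (fun p hp => ?_)
    simp only [Function.comp_apply, beq_iff_eq, decide_eq_true_eq, hυ, Real.dist_eq,
      zero_sub, abs_neg]
    by_cases hc : p.2 = 1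
    · rw [if_pos hc, abs_of_pos hε]
      exact iff_of_true rfl hc
    · rw [if_neg hc, abs_zero]
      exact iff_of_false hε.ne hc
  refine aux_kdtw_eq k m _ υ ε ?_ ?_
  · intro T hT
    rw [aux_topkSum_pair k ε hε _ (hl T)]
    have h1 : 1 ≤ (matchedDists (fun _ => (0 : ℝ)) υ T).count ε := by
      rw [hcnt T]
      have h2 := aux_countP_snd_ge hT (fun j => decide (j = 1)) [1] (by simp) ?_
      · simpa using h2
      · intro j hj
        simp only [mem_singleton] at hj
        subst hj
        exact ⟨by omega, by simp⟩
    have h3 : (1 : ℝ) ≤ (min k ((matchedDists (fun _ => (0 : ℝ)) υ T).count ε) : ℕ) := by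
      have : 1 ≤ min k ((matchedDists (fun _ => (0 : ℝ)) υ T).count ε) := by omega
      exact_mod_cast this
    nlinarith
  · refine ⟨_, aux_diag_traversal m (by omega), ?_⟩
    rw [aux_topkSum_pair k ε hε _ (hl _)]
    have hc1 : (matchedDists (fun _ => (0 : ℝ)) υ ((range m).map fun i => (i, i))).count ε = 1 := by
      rw [hcnt]
      have : ((range m).map fun i => (i, i)).countP (fun p => decide (p.2 = 1))
          = (range m).countP (fun i => decide (i = 1)) := by
        rw [countP_map]; rfl
      rw [this]
      have h4 : (range m).countP (fun i => decide (i = 1)) = (range m).count 1 := by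
        rw [count_eq_countP]
        refine countP_congr (fun i _ => ?_)
        simp
      rw [h4, count_eq_one_of_mem nodup_range (mem_range.mpr (by omega))]
    rw [hc1]
    have : min k 1 = 1 := by omega
    rw [this]
    norm_num

lemma part3 (m k : ℕ) (hm : 3 ≤ m) (hk : 1 ≤ k) (ε : ℝ) (hε : 0 < ε) :
    kDTW k (fun j => if j = 1 then ε else 0) (fun j => if j = 0 ∨ j = m - 1 then 0 else ε) m m
      = 0 := by
  set υ : ℕ → ℝ := fun j => if j = 1 then ε else 0 with hυ
  set τ : ℕ → ℝ := fun j => if j = 0 ∨ j = m - 1 then 0 else ε with hτ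
  have hl : ∀ T, ∀ x ∈ matchedDists υ τ T, x = 0 ∨ x = ε := by
    intro T x hx
    rw [matchedDists, mem_map] at hx
    obtain ⟨p, hp, rfl⟩ := hx
    simp only [hυ, hτ, Real.dist_eq]
    split_ifs with h1 h2 h3
    · right; rw [sub_zero]; exact abs_of_pos hε
    · left; rw [sub_self, abs_zero]
    · left; rw [sub_self, abs_zero]
    · right; rw [zero_sub, abs_neg]; exact abs_of_pos hε
  refine aux_kdtw_eq k m υ τ 0 ?_ ?_
  · intro T hT
    rw [aux_topkSum_pair k ε hε _ (hl T)]
    positivity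
  · refine ⟨_, aux_T3_traversal m hm, ?_⟩
    have hz : ∀ x ∈ matchedDists υ τ ((range (2 * m - 3)).map (g3 m)), x = 0 := by
      intro x hx
      rw [matchedDists, mem_map] at hx
      obtain ⟨p, hp, rfl⟩ := hx
      rw [mem_map] at hp
      obtain ⟨i, hi, rfl⟩ := hp
      rw [mem_range] at hi
      unfold g3
      split_ifs with h1 h2
      · simp [hυ, hτ]
      · have hni : ¬(i = 0 ∨ i = m - 1) := by omega
        simp [hυ, hτ, hni]
      · have h5 : ¬(i - (m - 3) = 1) := by omega
        simp [hυ, hτ, h5]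
    rw [aux_topkSum_pair k ε hε _ (hl _)]
    have hc0 : (matchedDists υ τ ((range (2 * m - 3)).map (g3 m))).count ε = 0 := by
      rw [count_eq_zero]
      intro hmem
      exact hε.ne' (hz ε hmem)
    rw [hc0]
    simp

/-- tightness of the factor `k` in the relaxed triangle inequality,
witnessed by the curves `σ = (0,…,0)`, `τ = (0,ε,…,ε,0)`, `υ = (0,ε,0,…,0)` in `ℝ`. -/
theorem kDTW_triangle_tight (m k : ℕ) (hm : 3 ≤ m) (hk : 1 ≤ k) (hkm : k ≤ m - 2)
    (ε : ℝ) (hε : 0 < ε) :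
    let σ : ℕ → ℝ := fun _ => 0
    let τ : ℕ → ℝ := fun j => if j = 0 ∨ j = m - 1 then 0 else ε
    let υ : ℕ → ℝ := fun j => if j = 1 then ε else 0
    kDTW k σ τ m m = (k : ℝ) * ε ∧
    kDTW k σ υ m m = ε ∧
    kDTW k υ τ m m = 0 ∧
    kDTW k σ τ m m = (k : ℝ) * (kDTW k σ υ m m + kDTW k υ τ m m) := by
  intro σ τ υ
  have h1 := part1 m k hm hk hkm ε hε
  have h2 := part2 m k hm hk ε hε
  have h3 := part3 m k hm hk ε hε
  refine ⟨h1, h2, h3, ?_⟩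
  rw [show kDTW k σ τ m m = (k : ℝ) * ε from h1,
    show kDTW k σ υ m m = ε from h2,
    show kDTW k υ τ m m = 0 from h3]
  ring
end

section
/- For any traversal T of two curves σ and τ, any parameter k, and any threshold value e ≥ 0, the quantity k·e + ∑_{(i,j)∈T} max{‖v_i − w_j‖ − e, 0} is at least the sum of the k largest matched distances in T. -/
open List

lemma topkSum_le_general (k : ℕ) (e : ℝ) (he : 0 ≤ e) (l : List ℝ) :
    topkSum k l ≤ (k : ℝ) * e + (l.map fun x => max (x - e) 0).sum := by
  set s := l.insertionSort (· ≥ ·) with hs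
  have hperm : s.Perm l := l.perm_insertionSort (· ≥ ·)
  have h1 : (s.take k).sum ≤ ((s.take k).map fun x => e + max (x - e) 0).sum := by
    rw [show (s.take k).sum = ((s.take k).map id).sum by rw [List.map_id]]
    apply List.sum_le_sum
    intro x _
    simp only [id]
    have : x - e ≤ max (x - e) 0 := le_max_left _ _
    linarith
  have h2 : ((s.take k).map fun x => e + max (x - e) 0).sum =
      ((s.take k).length : ℝ) * e + ((s.take k).map fun x => max (x - e) 0).sum := by
    induction (s.take k) with
    | nil => simp
    | cons a t ih => simp [ih]; ring
  have h3 : ((s.take k).length : ℝ) * e ≤ (k : ℝ) * e := by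
    apply mul_le_mul_of_nonneg_right _ he
    exact_mod_cast (List.length_take_le k s).trans (le_refl k)
  have h4 : ((s.take k).map fun x => max (x - e) 0).sum ≤
      (s.map fun x => max (x - e) 0).sum := by
    conv_rhs => rw [← List.take_append_drop k s]
    rw [List.map_append, List.sum_append]
    have : 0 ≤ ((s.drop k).map fun x => max (x - e) 0).sum := by
      apply List.sum_nonneg
      intro x hx
      simp only [List.mem_map] at hx
      obtain ⟨y, _, rfl⟩ := hx
      exact le_max_right _ _
    linarith
  have h5 : (s.map fun x => max (x - e) 0).sum = (l.map fun x => max (x - e) 0).sum :=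
    List.Perm.sum_eq (hperm.map _)
  calc topkSum k l = (s.take k).sum := rfl
    _ ≤ _ := h1
    _ = _ := h2
    _ ≤ (k : ℝ) * e + (l.map fun x => max (x - e) 0).sum := by
        rw [← h5] at *; linarith

/-- for any traversal `T`, parameter `k` and threshold `e ≥ 0`, the quantity
`k·e + ∑_{(i,j)∈T} max{‖v_i − w_j‖ − e, 0}` is at least the sum of the `k` largest
matched distances in `T`. -/
theorem topk_le_threshold_cost {d : ℕ} (k m' m'' : ℕ)
    (σ τ : ℕ → EuclideanSpace ℝ (Fin d))
    (T : List (ℕ × ℕ)) (hT : IsTraversal m' m'' T)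
    (e : ℝ) (he : 0 ≤ e) :
    topkSum k (matchedDists σ τ T) ≤
      (k : ℝ) * e + (T.map fun p => max (dist (σ p.1) (τ p.2) - e) 0).sum := by
  have := topkSum_le_general k e he (matchedDists σ τ T)
  simpa [matchedDists, List.map_map, Function.comp_def] using this
end

section
/- The breakdown point of the curve-of-top-k-median with respect to k-DTW is at least ⌊(k+1)/2⌋: for any curve π = (p_1,...,p_m) in ℝ^d with max_i ‖p_i − t_m(π)_1‖ = M and any corruption π_ℓ of at most ℓ = ⌊(k−1)/2⌋ vertices, the top-k-median of π_ℓ satisfies ‖t_m(π)_1 − t_m(π_ℓ)_1‖ ≤ 2M·⌊(k+1)/2⌋ < ∞. -/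
open List

/-- The top-`k` median cost of a point `s` for the curve `π` of complexity `m`. -/
noncomputable def topkMedCost {E : Type*} [PseudoMetricSpace E] (m k : ℕ)
    (π : ℕ → E) (s : E) : ℝ :=
  topkSum k ((List.range m).map fun i => dist (π i) s)

/-- `π'` is a corruption of the curve `π` (of complexity `m`) in at most `ℓ` vertices. -/
def IsCorruption {E : Type*} (m ℓ : ℕ) (π π' : ℕ → E) : Prop :=
  ∃ S : Finset ℕ, S.card ≤ ℓ ∧ ∀ i < m, i ∉ S → π' i = π i

section TopkAux
open List

lemma topkSum_perm' (k : ℕ) {l l' : List ℝ} (h : l ~ l') : topkSum k l = topkSum k l' := by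
  unfold topkSum
  rw [show l.insertionSort (· ≥ ·) = l'.insertionSort (· ≥ ·) from
    List.Perm.eq_of_pairwise (fun _ _ _ _ h1 h2 => le_antisymm h2 h1)
      (List.pairwise_insertionSort (r := (· ≥ ·)) l) (List.pairwise_insertionSort (r := (· ≥ ·)) l')
      ((List.perm_insertionSort _ l).trans (h.trans (List.perm_insertionSort _ l').symm))]

lemma sum_take_mono' {l : List ℝ} (hn : ∀ x ∈ l, 0 ≤ x) {j k : ℕ} (h : j ≤ k) :
    (l.take j).sum ≤ (l.take k).sum := by
  induction k generalizing l j with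
  | zero => interval_cases j; simp
  | succ k ih =>
    cases l with
    | nil => simp
    | cons a l =>
      cases j with
      | zero =>
        simp only [List.take_zero, List.sum_nil, List.take_succ_cons, List.sum_cons]
        have := List.sum_nonneg (l := l.take k)
          (fun x hx => hn x (List.mem_cons_of_mem _ (List.mem_of_mem_take hx)))
        have ha := hn a (List.mem_cons_self)
        linarith
      | succ j =>
        simp only [List.take_succ_cons, List.sum_cons]
        have := ih (fun x hx => hn x (List.mem_cons_of_mem _ hx)) (Nat.succ_le_succ_iff.mp h)
        linarith

lemma sorted_sublist_sum_le' {u l : List ℝ} (h : u <+ l) (hs : l.Pairwise (· ≥ ·))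
    (hn : ∀ x ∈ l, 0 ≤ x) : u.sum ≤ (l.take u.length).sum := by
  induction h with
  | slnil => simp
  | @cons l₁ l₂ a h ih =>
    have hs' : l₂.Pairwise (· ≥ ·) := hs.of_cons
    have hn' : ∀ x ∈ l₂, 0 ≤ x := fun x hx => hn x (List.mem_cons_of_mem _ hx)
    refine (ih hs' hn').trans ?_
    cases hu : l₁.length with
    | zero => simp
    | succ n =>
      simp only [List.take_succ_cons, List.sum_cons]
      by_cases hnl : n < l₂.length
      · have h1 : (l₂.take (n+1)).sum = (l₂.take n).sum + l₂[n] := List.sum_take_succ l₂ n hnl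
        have h2 : a ≥ l₂[n] := (List.pairwise_cons.mp hs).1 _ (List.getElem_mem hnl)
        linarith
      · push_neg at hnl
        rw [List.take_of_length_le (by omega), List.take_of_length_le hnl]
        have := hn a (List.mem_cons_self)
        linarith
  | @cons_cons l₁ l₂ a h ih =>
    have hs' : l₂.Pairwise (· ≥ ·) := hs.of_cons
    have hn' : ∀ x ∈ l₂, 0 ≤ x := fun x hx => hn x (List.mem_cons_of_mem _ hx)
    simp only [List.length_cons, List.take_succ_cons, List.sum_cons]
    linarith [ih hs' hn']

lemma subperm_sum_le_topkSum' {s l : List ℝ} (h : s <+~ l) (hn : ∀ x ∈ l, 0 ≤ x)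
    {k : ℕ} (hk : s.length ≤ k) : s.sum ≤ topkSum k l := by
  have hperm : l ~ l.insertionSort (· ≥ ·) := (List.perm_insertionSort _ l).symm
  obtain ⟨u, hus, hul⟩ := h.trans hperm.subperm
  have hn' : ∀ x ∈ l.insertionSort (· ≥ ·), 0 ≤ x := fun x hx =>
    hn x (hperm.symm.subset hx)
  calc s.sum = u.sum := (hus.sum_eq).symm
    _ ≤ ((l.insertionSort (· ≥ ·)).take u.length).sum :=
        sorted_sublist_sum_le' hul (List.pairwise_insertionSort (r := (· ≥ ·)) l) hn'
    _ ≤ ((l.insertionSort (· ≥ ·)).take k).sum :=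
        sum_take_mono' hn' (hus.length_eq ▸ hk)

lemma topkSum_append_le' {l₁ l₂ : List ℝ} {k : ℕ} {M : ℝ} (hM : 0 ≤ M)
    (hl₁ : l₁.length ≤ k) (hl₂ : ∀ x ∈ l₂, 0 ≤ x ∧ x ≤ M) :
    topkSum k (l₁ ++ l₂) ≤ (l₁.map (fun x => max x M)).sum + ((k - l₁.length : ℕ) : ℝ) * M := by
  classical
  set σ := (l₁ ++ l₂).insertionSort (· ≥ ·) with hσ
  have hperm : σ ~ l₁ ++ l₂ := List.perm_insertionSort _ _
  have htk : σ.take k <+~ l₁ ++ l₂ := (List.take_sublist k σ).subperm.trans hperm.subperm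
  obtain ⟨u, hus, hul⟩ := htk
  obtain ⟨u₁, u₂, rfl, h1, h2⟩ := List.sublist_append_iff.mp hul
  have hlen : u₁.length + u₂.length ≤ k := by
    have hl := hus.length_eq
    simp only [List.length_append] at hl
    rw [hl]
    simpa using List.length_take_le k σ
  have hlen1 : u₁.length ≤ l₁.length := h1.length_le
  have h1' : u₁.sum + ((l₁.length - u₁.length : ℕ) : ℝ) * M
      ≤ (l₁.map (fun x => max x M)).sum := by
    obtain ⟨c, hc⟩ : ∃ c : Multiset ℝ, (↑l₁ : Multiset ℝ) = ↑u₁ + c :=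
      ⟨(↑l₁ : Multiset ℝ) - ↑u₁, by
        rw [add_comm, tsub_add_cancel_of_le h1.subperm]⟩
    have hcard : l₁.length = u₁.length + Multiset.card c := by
      have := congrArg Multiset.card hc
      simpa using this
    have hmapsum : ((↑l₁ : Multiset ℝ).map (fun x => max x M)).sum
        = ((↑u₁ : Multiset ℝ).map (fun x => max x M)).sum
          + (c.map (fun x => max x M)).sum := by
      rw [hc, Multiset.map_add, Multiset.sum_add]
    have hu1 : u₁.sum ≤ ((↑u₁ : Multiset ℝ).map (fun x => max x M)).sum := by
      rw [Multiset.map_coe, Multiset.sum_coe]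
      simpa using List.sum_le_sum (l := u₁) (f := id) (g := fun x => max x M)
        (fun x _ => le_max_left x M)
    have hcsum : (Multiset.card c : ℝ) * M ≤ (c.map (fun x => max x M)).sum := by
      have := Multiset.card_nsmul_le_sum (s := c.map (fun x => max x M)) (a := M)
        (fun x hx => by
          obtain ⟨y, _, rfl⟩ := Multiset.mem_map.mp hx
          exact le_max_right y M)
      simpa [nsmul_eq_mul] using this
    have heq2 : (l₁.map (fun x => max x M)).sum
        = ((↑l₁ : Multiset ℝ).map (fun x => max x M)).sum := by
      rw [Multiset.map_coe, Multiset.sum_coe]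
    rw [heq2, hmapsum]
    have hcc : ((l₁.length - u₁.length : ℕ) : ℝ) = (Multiset.card c : ℝ) := by
      rw [hcard]; congr 1; omega
    rw [hcc]
    linarith
  have h2' : u₂.sum ≤ (u₂.length : ℝ) * M :=
    calc u₂.sum ≤ (u₂.map (fun _ => M)).sum := by
          simpa using List.sum_le_sum (l := u₂) (f := id) (g := fun _ => M)
            (fun x hx => (hl₂ x (h2.subset hx)).2)
      _ = (u₂.length : ℝ) * M := by simp [mul_comm]
  have hsum : topkSum k (l₁ ++ l₂) = u₁.sum + u₂.sum := by
    unfold topkSum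
    rw [← hσ, ← hus.sum_eq, List.sum_append]
  rw [hsum]
  have hfin : (u₂.length : ℝ) * M ≤ ((k - l₁.length : ℕ) : ℝ) * M
      + ((l₁.length - u₁.length : ℕ) : ℝ) * M := by
    rw [← add_mul]
    apply mul_le_mul_of_nonneg_right _ hM
    have hcast : ((k - l₁.length : ℕ) : ℝ) + ((l₁.length - u₁.length : ℕ) : ℝ)
        = ((k - l₁.length + (l₁.length - u₁.length) : ℕ) : ℝ) := by push_cast; ring
    rw [hcast]
    exact_mod_cast (by omega : u₂.length ≤ k - l₁.length + (l₁.length - u₁.length))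
  linarith

lemma finset_sum_filter_eq_list' (m : ℕ) (q : ℕ → Prop) [DecidablePred q] (g : ℕ → ℝ) :
    ∑ i ∈ (Finset.range m).filter q, g i
    = (((List.range m).filter (fun i => decide (q i))).map g).sum := by
  rw [Finset.sum]
  simp [Finset.filter_val, Finset.range_val, Multiset.filter_coe, Multiset.map_coe,
    Multiset.sum_coe, Multiset.range]

lemma finset_card_filter_eq_list' (m : ℕ) (q : ℕ → Prop) [DecidablePred q] :
    ((Finset.range m).filter q).card
    = ((List.range m).filter (fun i => decide (q i))).length := by
  rw [Finset.card]
  simp [Finset.filter_val, Finset.range_val, Multiset.filter_coe, Multiset.range]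

lemma toList_map_subperm' (F : Finset ℕ) (m : ℕ) (h : F ⊆ Finset.range m) (f : ℕ → ℝ) :
    F.toList.map f <+~ (List.range m).map f := by
  have h1 : (↑(F.toList.map f) : Multiset ℝ) ≤ ↑((List.range m).map f) := by
    rw [← Multiset.map_coe, ← Multiset.map_coe, Finset.coe_toList]
    have h2 : (↑(List.range m) : Multiset ℕ) = (Finset.range m).val := by
      simp [Finset.range_val, Multiset.range]
    rw [h2]
    exact Multiset.map_le_map (Finset.val_le_iff.mpr h)
  exact h1

end TopkAux

/-- the breakdown point of the curve-of-top-`k`-median is at least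
`⌊(k+1)/2⌋`: if all vertices of `π` are within distance `M` of its top-`k`-median, then
for any corruption of at most `⌊(k−1)/2⌋` vertices the top-`k`-median moves by at most
`2M·⌊(k+1)/2⌋`. -/
theorem topkMedian_breakdown_lower (d : ℕ) (m k : ℕ)
    (hk : 1 ≤ k) (hkm : k ≤ m)
    (Tm : (ℕ → EuclideanSpace ℝ (Fin d)) → EuclideanSpace ℝ (Fin d))
    (hmin : ∀ π s, topkMedCost m k π (Tm π) ≤ topkMedCost m k π s)
    (heq : ∀ π v, Tm (fun i => π i + v) = Tm π + v)
    (π π' : ℕ → EuclideanSpace ℝ (Fin d)) (M : ℝ)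
    (hM : ∀ i < m, dist (π i) (Tm π) ≤ M)
    (hcor : IsCorruption m ((k - 1) / 2) π π') :
    dist (Tm π) (Tm π') ≤ 2 * M * (((k + 1) / 2 : ℕ) : ℝ) := by
  classical
  obtain ⟨S, hScard, hSag⟩ := hcor
  have hm1 : 0 < m := by omega
  have hM0 : 0 ≤ M := le_trans dist_nonneg (hM 0 hm1)
  set t := Tm π with ht
  set t' := Tm π' with ht'
  set D := dist t t' with hDdef
  set q : ℕ := (k + 1) / 2 with hqdef
  have hq1 : 1 ≤ q := by omega
  by_cases hDM : D ≤ M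
  · have hq1' : (1 : ℝ) ≤ (q : ℝ) := by exact_mod_cast hq1
    nlinarith
  push_neg at hDM
  set S' := (Finset.range m).filter (· ∈ S) with hS'def
  have hS'sub : S' ⊆ Finset.range m := Finset.filter_subset _ _
  set a := S'.card with hadef
  have haS : a ≤ (k - 1) / 2 :=
    le_trans (Finset.card_le_card (fun i hi => (Finset.mem_filter.mp hi).2)) hScard
  have hak : a ≤ k := by omega
  obtain ⟨F, hSF, hFsub, hFcard⟩ :=
    Finset.exists_subsuperset_card_eq hS'sub hak (by simpa using hkm)
  set b := (F \ S').card with hbdef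
  have hab : b + a = k := by rw [hbdef, ← hFcard]; exact Finset.card_sdiff_add_card_eq_card hSF
  set f' : ℕ → ℝ := fun i => dist (π' i) t' with hf'
  set f0 : ℕ → ℝ := fun i => dist (π' i) t with hf0
  set g : ℕ → ℝ := fun i => max (f0 i) M with hg
  -- lower bound on the cost of t' for π'
  have hlow : (∑ i ∈ F, f' i) ≤ topkMedCost m k π' t' := by
    have hsub := toList_map_subperm' F m hFsub f'
    have hlen : (F.toList.map f').length ≤ k := by
      simp [Finset.length_toList, hFcard]
    have := subperm_sum_le_topkSum' hsub
      (fun x hx => by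
        obtain ⟨i, _, rfl⟩ := List.mem_map.mp hx
        exact dist_nonneg) hlen
    rwa [Finset.sum_map_toList] at this
  -- termwise lower bounds
  have hl1 : ∑ i ∈ S', (g i - D) ≤ ∑ i ∈ S', f' i := by
    refine Finset.sum_le_sum (fun i _ => ?_)
    have htri : f0 i ≤ f' i + D := by
      rw [hf0, hf', hDdef]
      calc dist (π' i) t ≤ dist (π' i) t' + dist t' t := dist_triangle _ _ _
        _ = dist (π' i) t' + dist t t' := by rw [dist_comm t' t]
    have hMD' : M ≤ f' i + D := by
      have h0 : (0:ℝ) ≤ f' i := dist_nonneg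
      linarith
    rw [sub_le_iff_le_add]
    exact max_le htri hMD'
  have hl2 : ∑ _i ∈ F \ S', (D - M) ≤ ∑ i ∈ F \ S', f' i := by
    refine Finset.sum_le_sum (fun i hi => ?_)
    have him : i ∈ Finset.range m := hFsub (Finset.mem_sdiff.mp hi).1
    have hiS : i ∉ S := fun h => (Finset.mem_sdiff.mp hi).2 (Finset.mem_filter.mpr ⟨him, h⟩)
    have hpi : π' i = π i := hSag i (Finset.mem_range.mp him) hiS
    have htri : D ≤ dist t (π i) + dist (π i) t' := by rw [hDdef]; exact dist_triangle _ _ _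
    have hMi : dist (π i) t ≤ M := hM i (Finset.mem_range.mp him)
    have : f' i = dist (π i) t' := by simp only [hf', hpi]
    rw [this]
    rw [dist_comm] at hMi
    linarith
  have hsum1 : ∑ i ∈ S', (g i - D) = (∑ i ∈ S', g i) - (a : ℝ) * D := by
    rw [Finset.sum_sub_distrib, Finset.sum_const, ← hadef, nsmul_eq_mul]
  have hsum2 : ∑ _i ∈ F \ S', (D - M) = (b : ℝ) * (D - M) := by
    rw [Finset.sum_const, ← hbdef, nsmul_eq_mul]
  have hsplit : (∑ i ∈ F \ S', f' i) + ∑ i ∈ S', f' i = ∑ i ∈ F, f' i :=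
    Finset.sum_sdiff hSF
  -- upper bound on the cost of t for π'
  have hup : topkMedCost m k π' t ≤ (∑ i ∈ S', g i) + (b : ℝ) * M := by
    have hcost : topkMedCost m k π' t = topkSum k ((List.range m).map f0) := rfl
    set pb : ℕ → Bool := fun i => decide (i ∈ S) with hpb
    set l₁ : List ℝ := ((List.range m).filter pb).map f0 with hl₁
    set l₂ : List ℝ := ((List.range m).filter (fun i => !pb i)).map f0 with hl₂
    have hperm : (List.range m).map f0 ~ l₁ ++ l₂ := by
      rw [hl₁, hl₂, ← List.map_append]
      exact (List.Perm.map f0 (List.filter_append_perm pb (List.range m))).symm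
    have hlena : l₁.length = a := by
      rw [hl₁, List.length_map, hadef, hS'def, finset_card_filter_eq_list']
    have hl₂mem : ∀ x ∈ l₂, 0 ≤ x ∧ x ≤ M := by
      intro x hx
      obtain ⟨i, hi, rfl⟩ := List.mem_map.mp hx
      have hir : i ∈ List.range m := List.mem_of_mem_filter hi
      have : ¬ (i ∈ S) := by
        have := List.of_mem_filter hi
        simpa [hpb] using this
      have hpi : π' i = π i := hSag i (List.mem_range.mp hir) this
      refine ⟨dist_nonneg, ?_⟩
      simp only [hf0, hpi]
      exact hM i (List.mem_range.mp hir)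
    have hmax : (l₁.map (fun x => max x M)).sum = ∑ i ∈ S', g i := by
      rw [hl₁, List.map_map, hS'def, finset_sum_filter_eq_list']
      rfl
    have hkna : ((k - l₁.length : ℕ) : ℝ) = (b : ℝ) := by
      rw [hlena]; congr 1; omega
    calc topkMedCost m k π' t = topkSum k (l₁ ++ l₂) := by rw [hcost, topkSum_perm' k hperm]
      _ ≤ (l₁.map (fun x => max x M)).sum + ((k - l₁.length : ℕ) : ℝ) * M :=
          topkSum_append_le' hM0 (by rw [hlena]; omega) hl₂mem
      _ = (∑ i ∈ S', g i) + (b : ℝ) * M := by rw [hmax, hkna]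
  -- combine
  have hmin' : topkMedCost m k π' t' ≤ topkMedCost m k π' t := hmin π' t
  have key : (b : ℝ) * D - (a : ℝ) * D ≤ 2 * (b : ℝ) * M := by
    have h1 : ((∑ i ∈ S', g i) - (a : ℝ) * D) + (b : ℝ) * (D - M)
        ≤ (∑ i ∈ S', g i) + (b : ℝ) * M := by
      calc ((∑ i ∈ S', g i) - (a : ℝ) * D) + (b : ℝ) * (D - M)
          ≤ (∑ i ∈ S', f' i) + ∑ i ∈ F \ S', f' i := by
            rw [← hsum1, ← hsum2]; linarith
        _ = ∑ i ∈ F, f' i := by rw [← hsplit]; ring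
        _ ≤ topkMedCost m k π' t' := hlow
        _ ≤ topkMedCost m k π' t := hmin'
        _ ≤ (∑ i ∈ S', g i) + (b : ℝ) * M := hup
    linarith
  have hba : a + 1 ≤ b := by omega
  have hqa : a + 1 ≤ q := by omega
  have hbaR : (a : ℝ) + 1 ≤ (b : ℝ) := by exact_mod_cast hba
  have hqaR : (a : ℝ) + 1 ≤ (q : ℝ) := by exact_mod_cast hqa
  have ha0 : (0 : ℝ) ≤ (a : ℝ) := Nat.cast_nonneg a
  by_contra hcon
  push_neg at hcon
  nlinarith [mul_nonneg (mul_nonneg hM0 ha0) (by linarith : (0:ℝ) ≤ (b:ℝ) - a - 1),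
    mul_nonneg (by linarith : (0:ℝ) ≤ D - 2*M*q) (by linarith : (0:ℝ) ≤ (b:ℝ) - a - 1),
    mul_nonneg (mul_nonneg hM0 (by linarith : (0:ℝ) ≤ (q:ℝ) - a - 1))
      (by linarith : (0:ℝ) ≤ (b:ℝ) - a)]
end

section
/- Let C be an ε'-net of the unit Euclidean ball B_2^d of size at most (1 + 2/ε')^d, and for each curve ψ of complexity m with vertices in B_2^d let ψ' be the curve obtained by replacing each vertex by a nearest net point in C. Then for every curve σ of complexity at most m, |d_DTW(σ,ψ) − d_DTW(σ,ψ')| ≤ 2mε'. In particular, choosing ε' = ε/(2m), the set of cost vectors induced by curves with vertices in C forms an ℓ_∞ ε-net of the DTW cost vectors of size at most exp(c·d·m·log(m/ε)) for an absolute constant c. -/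
open List

lemma trav_base : IsTraversal 1 1 [(0, 0)] := by
  refine ⟨by simp, rfl, rfl, by simp, List.isChain_singleton _⟩

lemma trav_append_right {a b : ℕ} {T : List (ℕ × ℕ)} (hb : 1 ≤ b) (h : IsTraversal a b T) :
    IsTraversal a (b + 1) (T ++ [(a - 1, b)]) := by
  obtain ⟨hne, hh, hl, hmem, hch⟩ := h
  obtain ⟨x, t, rfl⟩ := List.exists_cons_of_ne_nil hne
  refine ⟨by simp, ?_, ?_, ?_, ?_⟩
  · simpa using hh
  · show ((x :: t) ++ [(a - 1, b)]).getLast? = _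
    rw [List.getLast?_concat]
    simp
  · intro p hp
    have hx := hmem x List.mem_cons_self
    simp only [List.mem_append, List.mem_singleton] at hp
    rcases hp with hp | rfl
    · have := hmem p hp
      omega
    · simp
      omega
  · unfold List.Chain'
    rw [List.isChain_append]
    refine ⟨hch, by simp, ?_⟩
    intro x hx y hy
    simp only [List.head?_cons, Option.mem_some_iff] at hy
    rw [hl] at hx
    simp only [Option.mem_some_iff] at hx
    subst hx; subst hy
    right; left
    simp
    omega

lemma trav_append_left {a b : ℕ} {T : List (ℕ × ℕ)} (ha : 1 ≤ a) (h : IsTraversal a b T) :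
    IsTraversal (a + 1) b (T ++ [(a, b - 1)]) := by
  obtain ⟨hne, hh, hl, hmem, hch⟩ := h
  obtain ⟨x, t, rfl⟩ := List.exists_cons_of_ne_nil hne
  refine ⟨by simp, ?_, ?_, ?_, ?_⟩
  · simpa using hh
  · show ((x :: t) ++ [(a, b - 1)]).getLast? = _
    rw [List.getLast?_concat]
    simp
  · intro p hp
    have hx := hmem x List.mem_cons_self
    simp only [List.mem_append, List.mem_singleton] at hp
    rcases hp with hp | rfl
    · have := hmem p hp
      omega
    · simp
      omega
  · unfold List.Chain'
    rw [List.isChain_append]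
    refine ⟨hch, by simp, ?_⟩
    intro x hx y hy
    simp only [List.head?_cons, Option.mem_some_iff] at hy
    rw [hl] at hx
    simp only [Option.mem_some_iff] at hx
    subst hx; subst hy
    left
    simp
    omega

lemma trav_exists (a b : ℕ) (ha : 1 ≤ a) (hb : 1 ≤ b) : ∃ T, IsTraversal a b T := by
  obtain ⟨a', rfl⟩ := Nat.exists_eq_succ_of_ne_zero (by omega : a ≠ 0)
  obtain ⟨b', rfl⟩ := Nat.exists_eq_succ_of_ne_zero (by omega : b ≠ 0)
  clear ha hb
  induction a' with
  | zero =>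
    induction b' with
    | zero => exact ⟨_, trav_base⟩
    | succ b'' ih =>
      obtain ⟨T, hT⟩ := ih
      exact ⟨_, trav_append_right (by omega) hT⟩
  | succ a'' ih =>
    obtain ⟨T, hT⟩ := ih
    exact ⟨_, trav_append_left (by omega) hT⟩


lemma trav_length {a b : ℕ} {T : List (ℕ × ℕ)} (h : IsTraversal a b T) : T.length ≤ a + b := by
  obtain ⟨hne, hh, hl, hmem, hch⟩ := h
  have h1 : (T.map fun p => p.1 + p.2).Chain' (· < ·) := by
    unfold List.Chain'
    rw [List.isChain_map]
    refine List.IsChain.imp ?_ hch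
    rintro x y (rfl | rfl | rfl) <;> simp <;> omega
  have h2 : (T.map fun p => p.1 + p.2).Nodup :=
    (List.isChain_iff_pairwise.mp h1).imp ne_of_lt
  have h3 : (T.map fun p => p.1 + p.2).toFinset ⊆ Finset.range (a + b) := by
    intro x hx
    simp only [List.mem_toFinset, List.mem_map] at hx
    obtain ⟨p, hp, rfl⟩ := hx
    have := hmem p hp
    simp only [Finset.mem_range]
    omega
  calc T.length = (T.map fun p => p.1 + p.2).length := by simp
    _ = (T.map fun p => p.1 + p.2).toFinset.card := (List.toFinset_card_of_nodup h2).symm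
    _ ≤ (Finset.range (a + b)).card := Finset.card_le_card h3
    _ = a + b := by simp

lemma matched_nonneg {E : Type*} [PseudoMetricSpace E] (σ τ : ℕ → E) (T : List (ℕ × ℕ)) :
    0 ≤ (matchedDists σ τ T).sum := by
  apply List.sum_nonneg
  intro x hx
  simp only [matchedDists, List.mem_map] at hx
  obtain ⟨p, _, rfl⟩ := hx
  exact dist_nonneg

lemma sum_diff {E : Type*} [PseudoMetricSpace E] (σ ψ ψ' : ℕ → E) (T : List (ℕ × ℕ))
    (m : ℕ) (ε' : ℝ) (hm : ∀ p ∈ T, p.2 < m) (hd : ∀ j < m, dist (ψ j) (ψ' j) ≤ ε') :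
    |(matchedDists σ ψ T).sum - (matchedDists σ ψ' T).sum| ≤ T.length * ε' := by
  induction T with
  | nil => simp [matchedDists]
  | cons p t ih =>
    have h1 : |dist (σ p.1) (ψ p.2) - dist (σ p.1) (ψ' p.2)| ≤ ε' := by
      refine le_trans ?_ (hd p.2 (hm p List.mem_cons_self))
      rw [dist_comm (σ p.1) (ψ p.2), dist_comm (σ p.1) (ψ' p.2)]
      exact abs_dist_sub_le _ _ _
    have h2 := ih (fun q hq => hm q (List.mem_cons_of_mem p hq))
    simp only [matchedDists, List.map_cons, List.sum_cons, List.length_cons] at *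
    have : ((t.length : ℝ) + 1) * ε' = ε' + t.length * ε' := by ring
    rw [Nat.cast_add, Nat.cast_one, this]
    calc |dist (σ p.1) (ψ p.2) + (t.map fun q => dist (σ q.1) (ψ q.2)).sum -
          (dist (σ p.1) (ψ' p.2) + (t.map fun q => dist (σ q.1) (ψ' q.2)).sum)|
        ≤ |dist (σ p.1) (ψ p.2) - dist (σ p.1) (ψ' p.2)| +
          |(t.map fun q => dist (σ q.1) (ψ q.2)).sum -
           (t.map fun q => dist (σ q.1) (ψ' q.2)).sum| := by
          apply le_trans (le_of_eq (by ring_nf)) (abs_add_le _ _)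
      _ ≤ ε' + t.length * ε' := add_le_add h1 h2

lemma csInf_le_csInf_add {S S' : Set ℝ} {K : ℝ} (hS : BddBelow S) (hS' : S'.Nonempty)
    (h : ∀ y ∈ S', ∃ x ∈ S, x ≤ y + K) : sInf S ≤ sInf S' + K := by
  have h1 : sInf S - K ≤ sInf S' := by
    apply le_csInf hS'
    intro y hy
    obtain ⟨x, hx, hxy⟩ := h y hy
    have := csInf_le hS hx
    linarith
  linarith

lemma dtw_stab {E : Type*} [PseudoMetricSpace E] (σ ψ ψ' : ℕ → E) (a m : ℕ)
    (ha : 1 ≤ a) (ham : a ≤ m) (ε' : ℝ) (hε' : 0 ≤ ε')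
    (hd : ∀ j < m, dist (ψ j) (ψ' j) ≤ ε') :
    |DTW σ ψ a m - DTW σ ψ' a m| ≤ 2 * m * ε' := by
  have hm : 1 ≤ m := le_trans ha ham
  set S : Set ℝ := {x | ∃ T, IsTraversal a m T ∧ x = (matchedDists σ ψ T).sum} with hSdef
  set S' : Set ℝ := {x | ∃ T, IsTraversal a m T ∧ x = (matchedDists σ ψ' T).sum} with hS'def
  have key : ∀ T, IsTraversal a m T →
      |(matchedDists σ ψ T).sum - (matchedDists σ ψ' T).sum| ≤ 2 * m * ε' := by
    intro T hT
    refine le_trans (sum_diff σ ψ ψ' T m ε' (fun p hp => (hT.2.2.2.1 p hp).2) hd) ?_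
    have hlen := trav_length hT
    have hT2 : (T.length : ℝ) ≤ 2 * m := by
      have h1 : T.length ≤ 2 * m := by omega
      exact_mod_cast h1
    calc (T.length : ℝ) * ε' ≤ (2 * m) * ε' := mul_le_mul_of_nonneg_right hT2 hε'
      _ = 2 * m * ε' := by ring
  obtain ⟨T0, hT0⟩ := trav_exists a m ha hm
  have hne : S.Nonempty := ⟨_, T0, hT0, rfl⟩
  have hne' : S'.Nonempty := ⟨_, T0, hT0, rfl⟩
  have hbd : BddBelow S := ⟨0, fun x ⟨T, _, hx⟩ => hx ▸ matched_nonneg σ ψ T⟩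
  have hbd' : BddBelow S' := ⟨0, fun x ⟨T, _, hx⟩ => hx ▸ matched_nonneg σ ψ' T⟩
  rw [abs_sub_le_iff]
  constructor
  · show sInf S - sInf S' ≤ _
    have : sInf S ≤ sInf S' + 2 * m * ε' := by
      apply csInf_le_csInf_add hbd hne'
      rintro y ⟨T, hT, rfl⟩
      refine ⟨(matchedDists σ ψ T).sum, ⟨T, hT, rfl⟩, ?_⟩
      have := key T hT
      rw [abs_sub_le_iff] at this
      linarith [this.1]
    linarith
  · show sInf S' - sInf S ≤ _
    have : sInf S' ≤ sInf S + 2 * m * ε' := by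
      apply csInf_le_csInf_add hbd' hne
      rintro y ⟨T, hT, rfl⟩
      refine ⟨(matchedDists σ ψ' T).sum, ⟨T, hT, rfl⟩, ?_⟩
      have := key T hT
      rw [abs_sub_le_iff] at this
      linarith [this.2]
    linarith


/-- replacing the vertices of a median curve by nearest points of an
`ε'`-net `C` of the unit ball changes each DTW cost by at most `2mε'`; in particular,
with `ε' = ε/(2m)`, the cost vectors of curves with vertices in `C` form an `ℓ_∞` `ε`-net
of the DTW cost vectors, of size at most `exp(c·d·m·log(m/ε))` for an absolute constant. -/
theorem dtw_net_bound :
    ∃ c : ℝ, 0 < c ∧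
      ∀ (d m n : ℕ), 1 ≤ d → 1 ≤ m → 1 ≤ n →
      ∀ (P : Fin n → ℕ → EuclideanSpace ℝ (Fin d)) (mP : Fin n → ℕ),
        (∀ i, 1 ≤ mP i ∧ mP i ≤ m) →
        (∀ i j, j < mP i → ‖P i j‖ ≤ 1) →
        ((∀ ε' : ℝ, 0 < ε' →
          ∀ C : Finset (EuclideanSpace ℝ (Fin d)),
            (∀ x : EuclideanSpace ℝ (Fin d), ‖x‖ ≤ 1 → ∃ y ∈ C, dist x y ≤ ε') →
            ((C.card : ℝ) ≤ (1 + 2 / ε') ^ d) →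
            ∀ ψ ψ' : ℕ → EuclideanSpace ℝ (Fin d),
              (∀ j < m, ‖ψ j‖ ≤ 1) →
              (∀ j < m, ψ' j ∈ C ∧ dist (ψ j) (ψ' j) ≤ ε') →
              ∀ i, |DTW (P i) ψ (mP i) m - DTW (P i) ψ' (mP i) m| ≤ 2 * m * ε')
        ∧ (∀ ε : ℝ, 0 < ε → ε ≤ 1 / 2 →
          ∀ C : Finset (EuclideanSpace ℝ (Fin d)),
            (∀ x : EuclideanSpace ℝ (Fin d), ‖x‖ ≤ 1 → ∃ y ∈ C, dist x y ≤ ε / (2 * m)) →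
            ((C.card : ℝ) ≤ (1 + 2 / (ε / (2 * m))) ^ d) →
            ∃ N : Finset (Fin n → ℝ),
              (N.card : ℝ) ≤ Real.exp (c * d * m * Real.log (m / ε)) ∧
              ∀ ψ : ℕ → EuclideanSpace ℝ (Fin d), (∀ j < m, ‖ψ j‖ ≤ 1) →
                ∃ v ∈ N, ∀ i, |v i - DTW (P i) ψ (mP i) m| ≤ ε)) := by
  refine ⟨4, by norm_num, ?_⟩
  intro d m n hd hm hn P mP hmP hPnorm
  have hm1 : (1:ℝ) ≤ (m:ℝ) := by exact_mod_cast hm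
  have hmpos : (0:ℝ) < m := by linarith
  constructor
  · intro ε' hε' C hnet hcard ψ ψ' hψ hψ' i
    exact dtw_stab (P i) ψ ψ' (mP i) m (hmP i).1 (hmP i).2 ε' hε'.le
      (fun j hj => (hψ' j hj).2)
  · intro ε hε hε2 C hnet hcard
    classical
    set ε' := ε / (2 * m) with hε'def
    have hε'pos : 0 < ε' := by positivity
    set ext : (Fin m → ↥C) → ℕ → EuclideanSpace ℝ (Fin d) :=
      fun f j => if h : j < m then (f ⟨j, h⟩ : EuclideanSpace ℝ (Fin d)) else 0 with hext
    set g : (Fin m → ↥C) → (Fin n → ℝ) := fun f i => DTW (P i) (ext f) (mP i) m with hg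
    refine ⟨Finset.image g Finset.univ, ?_, ?_⟩
    · have h1 : (Finset.image g Finset.univ).card ≤ C.card ^ m := by
        refine le_trans Finset.card_image_le ?_
        simp [Finset.card_univ]
      have hr : (2:ℝ) ≤ (m:ℝ)/ε := by
        rw [le_div_iff₀ hε]; nlinarith
      have hrpos : (0:ℝ) < (m:ℝ)/ε := by linarith
      have hb : (1 + 2 / ε') ≤ ((m:ℝ)/ε)^4 := by
        have h2 : 2/ε' = 4*(m:ℝ)/ε := by
          rw [hε'def]; field_simp; ring
        rw [h2]
        have h3 : (1:ℝ) ≤ (m:ℝ)/ε := by linarith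
        have h4 : 1 + 4*(m:ℝ)/ε ≤ 5 * ((m:ℝ)/ε) := by
          have : 4*(m:ℝ)/ε = 4 * ((m:ℝ)/ε) := by ring
          rw [this]; nlinarith
        refine le_trans h4 ?_
        have h8 : (2:ℝ)^3 ≤ ((m:ℝ)/ε)^3 := pow_le_pow_left₀ (by norm_num) hr 3
        nlinarith [mul_le_mul_of_nonneg_left h8 hrpos.le]
      have hbase : (0:ℝ) ≤ 1 + 2/ε' := by positivity
      calc ((Finset.image g Finset.univ).card : ℝ) ≤ ((C.card : ℝ))^m := by
            exact_mod_cast h1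
        _ ≤ ((1 + 2/ε')^d)^m := pow_le_pow_left₀ (Nat.cast_nonneg _) hcard m
        _ = (1 + 2/ε')^(d*m) := (pow_mul _ d m).symm
        _ ≤ (((m:ℝ)/ε)^4)^(d*m) := pow_le_pow_left₀ hbase hb _
        _ = ((m:ℝ)/ε)^(4*(d*m)) := by rw [← pow_mul]
        _ ≤ Real.exp (4 * d * m * Real.log ((m:ℝ)/ε)) := by
            rw [← Real.exp_log (pow_pos hrpos (4*(d*m))), Real.log_pow]
            refine Real.exp_le_exp.mpr (le_of_eq ?_)
            push_cast; ring
    · intro ψ hψ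
      have hch : ∀ j : Fin m, ∃ y ∈ C, dist (ψ (j:ℕ)) y ≤ ε' := fun j => hnet (ψ j) (hψ j j.2)
      set f : Fin m → ↥C := fun j => ⟨(hch j).choose, (hch j).choose_spec.1⟩ with hf
      refine ⟨g f, Finset.mem_image_of_mem g (Finset.mem_univ f), ?_⟩
      intro i
      have hdd : ∀ j < m, dist (ψ j) (ext f j) ≤ ε' := by
        intro j hj
        have : ext f j = (hch ⟨j, hj⟩).choose := by
          rw [hext]; simp only [hf]; rw [dif_pos hj]
        rw [this]
        exact (hch ⟨j, hj⟩).choose_spec.2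
      have hst := dtw_stab (P i) ψ (ext f) (mP i) m (hmP i).1 (hmP i).2 ε' hε'pos.le hdd
      rw [abs_sub_comm] at hst
      have heq : 2 * (m:ℝ) * ε' = ε := by
        rw [hε'def]; field_simp
      show |DTW (P i) (ext f) (mP i) m - DTW (P i) ψ (mP i) m| ≤ ε
      rw [← heq]
      exact hst
end
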